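/- Let 0<p<q, p+q=1. Define π_0 = (q−p)/q and π_j = ((q−p)/(pq))·(p²/q²)^j for j≥1. Then Σ_{j≥0} π_j = 1 and the balance equations hold: π_j = p²·π_{j−1} + 2pq·π_j + q²·π_{j+1} for j≥2, π_1 = p·π_0 + 2pq·π_1 + q²·π_2, and π_0 = q·π_0 + q²·π_1. -/

import Mathlib

/-- Stationary distribution of the subwalk at odd times (`VU`) for the
traffic light queue with `ℓ = 1`. -/
theorem stmt_2 (p q : ℝ) (hp : 0 < p) (hpq : p < q) (hsum : p + q = 1)
    (π : ℕ → ℝ) (hπ0 : π 0 = (q - p) / q)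
    (hπ : ∀ j : ℕ, 1 ≤ j → π j = ((q - p) / (p * q)) * (p ^ 2 / q ^ 2) ^ j) :
    (∑' j : ℕ, π j) = 1 ∧
    (∀ j : ℕ, 2 ≤ j →
      π j = p ^ 2 * π (j - 1) + 2 * p * q * π j + q ^ 2 * π (j + 1)) ∧
    π 1 = p * π 0 + 2 * p * q * π 1 + q ^ 2 * π 2 ∧
    π 0 = q * π 0 + q ^ 2 * π 1 := by
  have hq : 0 < q := hp.trans hpq
  have hp0 : p ≠ 0 := hp.ne'
  have hq0 : q ≠ 0 := hq.ne'
  have hq1 : q = 1 - p := by linarith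
  subst hq1
  have hp1 : (1 : ℝ) - p ≠ 0 := hq0
  have h2p : (1 : ℝ) - 2 * p ≠ 0 := by
    have : p < 1 - p := hpq; intro h; nlinarith
  set r : ℝ := p ^ 2 / (1 - p) ^ 2 with hrdef
  have hr0 : 0 ≤ r := by positivity
  have hr1 : r < 1 := by
    rw [hrdef, div_lt_one (by positivity)]
    nlinarith
  have hrne : (1 : ℝ) - r ≠ 0 := by linarith
  set c : ℝ := (1 - p - p) / (p * (1 - p)) with hcdef
  have hrval : r = p ^ 2 + 2 * p * (1 - p) * r + (1 - p) ^ 2 * (r * r) := by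
    rw [hrdef]
    field_simp
    ring
  have hshift : (fun j : ℕ => π (j + 1)) = fun j : ℕ => (c * r) * r ^ j := by
    funext j
    rw [hπ (j + 1) (by omega), pow_succ]
    ring
  have hsgeo : Summable (fun j : ℕ => r ^ j) :=
    summable_geometric_of_lt_one hr0 hr1
  have hs1 : Summable (fun j : ℕ => π (j + 1)) := by
    rw [hshift]; exact hsgeo.mul_left _
  have hsπ : Summable π := (summable_nat_add_iff 1).mp hs1
  refine ⟨?_, ?_, ?_, ?_⟩
  · rw [Summable.tsum_eq_zero_add hsπ, hshift, tsum_mul_left,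
      tsum_geometric_of_lt_one hr0 hr1, hπ0, hcdef, hrdef]
    rw [show (1 : ℝ) - p ^ 2 / (1 - p) ^ 2 = (1 - 2 * p) / (1 - p) ^ 2 by
      field_simp; ring]
    field_simp
    have h2p' : (1 : ℝ) - p * 2 ≠ 0 := by contrapose! h2p; linarith
    field_simp
    ring
  · intro j hj
    obtain ⟨k, rfl⟩ : ∃ k, j = k + 2 := ⟨j - 2, by omega⟩
    have h1 : π (k + 2 - 1) = c * r ^ (k + 1) := hπ (k + 1) (by omega)
    have h2 : π (k + 2) = c * r ^ (k + 2) := hπ (k + 2) (by omega)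
    have h3 : π (k + 2 + 1) = c * r ^ (k + 3) := hπ (k + 3) (by omega)
    rw [h1, h2, h3]
    linear_combination (c * r ^ (k + 1)) * hrval
  · rw [hπ0, hπ 1 le_rfl, hπ 2 (by norm_num)]
    rw [hcdef, hrdef]
    field_simp
    ring
  · rw [hπ0, hπ 1 le_rfl, hcdef, hrdef]
    field_simp
    ring
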